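/- Let J ∈ M_n(ℝ) be a real Jordan-type matrix with block moduli 1 < ρ_1 < ⋯ < ρ_s and for each k ≥ 1 let T_k be as in the context. Then there exist c' > 0, η > 1 and k₀ ∈ ℕ such that for every k ≥ k₀ the matrix T_k is invertible and, for every l ∈ ℕ, ‖J^{-kl}‖ ≤ c'/η^{kl} and ‖T_k^{-l}‖ ≤ c'/η^{kl}. -/

import Mathlib

open Filter MeasureTheory Metric Set Matrix
open scoped Topology ENNReal NNReal

noncomputable section

namespace FracPert

/-- View a plain vector as a point of Euclidean space. -/
def euc {n : ℕ} (v : Fin n → ℝ) : EuclideanSpace ℝ (Fin n) := WithLp.toLp 2 v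

/-- The real matrix associated with an integer matrix. -/
def intMat {n : ℕ} (T : Matrix (Fin n) (Fin n) ℤ) : Matrix (Fin n) (Fin n) ℝ :=
  T.map fun x => (x : ℝ)

/-- An integer vector as a real vector. -/
def zVec {n : ℕ} (v : Fin n → ℤ) : Fin n → ℝ := fun i => (v i : ℝ)

/-- An integer matrix is expanding if all of its complex eigenvalues have modulus `> 1`. -/
def IsExpandingZ {n : ℕ} (T : Matrix (Fin n) (Fin n) ℤ) : Prop :=
  ∀ μ : ℂ, (T.map fun x => (x : ℂ)).charpoly.IsRoot μ → 1 < ‖μ‖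

/-- A real matrix is expanding if all of its complex eigenvalues have modulus `> 1`. -/
def IsExpandingR {n : ℕ} (T : Matrix (Fin n) (Fin n) ℝ) : Prop :=
  ∀ μ : ℂ, (T.map fun x => (x : ℂ)).charpoly.IsRoot μ → 1 < ‖μ‖

/-- `F` is the self-affine set generated by the real matrix `M` and the digit set `A`:
`F` is nonempty, compact, and `F = ⋃_{a ∈ A} M⁻¹ (F + a)`. -/
def IsSelfAffineR {n : ℕ} (M : Matrix (Fin n) (Fin n) ℝ) (A : Set (Fin n → ℝ))
    (F : Set (EuclideanSpace ℝ (Fin n))) : Prop :=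
  F.Nonempty ∧ IsCompact F ∧
    F = ⋃ a ∈ A, (fun x : EuclideanSpace ℝ (Fin n) => euc (M⁻¹ *ᵥ (x + euc a))) '' F

/-- Integral self-affine set. -/
def IsSelfAffineZ {n : ℕ} (T : Matrix (Fin n) (Fin n) ℤ) (A : Set (Fin n → ℤ))
    (F : Set (EuclideanSpace ℝ (Fin n))) : Prop :=
  IsSelfAffineR (intMat T) (zVec '' A) F

/-- The iterated digit sets `A_k = {∑_{i=1}^k T^{k-i} a_i : a_i ∈ A}`. -/
def digitSetIter {n : ℕ} (T : Matrix (Fin n) (Fin n) ℤ) (A : Set (Fin n → ℤ)) (k : ℕ) :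
    Set (Fin n → ℤ) :=
  { v | ∃ a : Fin k → Fin n → ℤ, (∀ i, a i ∈ A) ∧
      v = ∑ i : Fin k, (T ^ (k - 1 - (i : ℕ))) *ᵥ a i }

/-- The iterated digit sets for a real matrix. -/
def digitSetIterR {n : ℕ} (J : Matrix (Fin n) (Fin n) ℝ) (A : Set (Fin n → ℝ)) (k : ℕ) :
    Set (Fin n → ℝ) :=
  { v | ∃ a : Fin k → Fin n → ℝ, (∀ i, a i ∈ A) ∧
      v = ∑ i : Fin k, (J ^ (k - 1 - (i : ℕ))) *ᵥ a i }

/-- The signed floor. -/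
def sfloor (t : ℝ) : ℤ := if 0 ≤ t then ⌊t⌋ else -⌊|t|⌋

/-- The signed ceiling. -/
def sceil (t : ℝ) : ℤ := if 0 ≤ t then ⌈t⌉ else -⌈|t|⌉

/-- Entrywise signed floor of a vector. -/
def sfloorVec {n : ℕ} (v : Fin n → ℝ) : Fin n → ℤ := fun i => sfloor (v i)

/-- The perturbed matrix `T_k`: the entrywise signed ceiling of `J^k`. -/
def pertMat {n : ℕ} (J : Matrix (Fin n) (Fin n) ℝ) (k : ℕ) : Matrix (Fin n) (Fin n) ℤ :=
  Matrix.of fun i j => sceil ((J ^ k) i j)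

/-- A real Jordan block for a real eigenvalue: lower triangular, `lam` on the diagonal,
`1` on the subdiagonal. -/
def realJordanBlock (d : ℕ) (lam : ℝ) : Matrix (Fin d) (Fin d) ℝ :=
  Matrix.of fun i j =>
    if (i : ℕ) = (j : ℕ) then lam else if (i : ℕ) = (j : ℕ) + 1 then 1 else 0

/-- A real Jordan block for a non-real eigenvalue `a + b i`, made of `2 × 2` blocks:
`C = [[a, -b], [b, a]]` on the block diagonal and `I₂` on the block subdiagonal. -/
def complexJordanBlock (m : ℕ) (a b : ℝ) : Matrix (Fin (2 * m)) (Fin (2 * m)) ℝ :=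
  Matrix.of fun i j =>
    if (i : ℕ) / 2 = (j : ℕ) / 2 then
      (if (i : ℕ) % 2 = (j : ℕ) % 2 then a else if (i : ℕ) % 2 = 0 then -b else b)
    else if (i : ℕ) / 2 = (j : ℕ) / 2 + 1 then
      (if (i : ℕ) % 2 = (j : ℕ) % 2 then 1 else 0)
    else 0

/-- `B` is a real Jordan-type block with eigenvalue modulus `ρ` and algebraic multiplicity
`np`. -/
def IsJordanBlock {d : ℕ} (B : Matrix (Fin d) (Fin d) ℝ) (ρ : ℝ) (np : ℕ) : Prop :=
  (d = np ∧ ∃ lam : ℝ, |lam| = ρ ∧ B = realJordanBlock d lam) ∨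
  (∃ h : d = 2 * np, ∃ a b : ℝ, b ≠ 0 ∧ Real.sqrt (a ^ 2 + b ^ 2) = ρ ∧
      B = Matrix.reindex (finCongr h).symm (finCongr h).symm (complexJordanBlock np a b))

/-- The index identification `(Σ p, Fin (d p)) ≃ Fin n` respects the block order
(lexicographic order on the sigma type). -/
def IsJordanArrangement {n s : ℕ} (d : Fin s → ℕ)
    (e : ((p : Fin s) × Fin (d p)) ≃ Fin n) : Prop :=
  ∀ x y : (p : Fin s) × Fin (d p), Sigma.Lex (· < ·) (fun _ => (· < ·)) x y → e x < e y

/-- `J` is a real Jordan-type matrix: a block diagonal matrix with real Jordan-type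
blocks whose eigenvalue moduli are `ρ 0 < ρ 1 < ⋯`, all `> 1`. -/
def IsRealJordanLike {n s : ℕ} (J : Matrix (Fin n) (Fin n) ℝ) (ρ : Fin s → ℝ) : Prop :=
  (∀ p, 1 < ρ p) ∧ StrictMono ρ ∧
  ∃ (d np : Fin s → ℕ) (B : ∀ p, Matrix (Fin (d p)) (Fin (d p)) ℝ)
    (e : ((p : Fin s) × Fin (d p)) ≃ Fin n),
    (∀ p, 0 < np p) ∧ (∀ p, IsJordanBlock (B p) (ρ p) (np p)) ∧
    IsJordanArrangement d e ∧
    J = Matrix.reindex e e (Matrix.blockDiagonal' B)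

/-- Perturbation data for an integer matrix `T`: an invertible real matrix `P` such that
`J = P⁻¹ T P` is a real Jordan-type matrix and distinct points of the lattice `P⁻¹ ℤ^n`
are at distance `> n`. -/
def IsPerturbationData {n s : ℕ} (T : Matrix (Fin n) (Fin n) ℤ)
    (P : Matrix (Fin n) (Fin n) ℝ) (ρ : Fin s → ℝ) : Prop :=
  IsUnit P ∧ IsRealJordanLike (P⁻¹ * intMat T * P) ρ ∧
    ∀ v w : Fin n → ℤ, v ≠ w →
      (n : ℝ) < ‖euc (P⁻¹ *ᵥ zVec v - P⁻¹ *ᵥ zVec w)‖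

/-- The digit sets `Ã_k = P⁻¹ A_k`. -/
def tildeDigits {n : ℕ} (T : Matrix (Fin n) (Fin n) ℤ) (A : Set (Fin n → ℤ))
    (P : Matrix (Fin n) (Fin n) ℝ) (k : ℕ) : Set (Fin n → ℝ) :=
  (fun a => P⁻¹ *ᵥ zVec a) '' digitSetIter T A k

/-- The perturbed digit sets `D_k = ⌊Ã_k⌋±`. -/
def pertDigits {n : ℕ} (T : Matrix (Fin n) (Fin n) ℤ) (A : Set (Fin n → ℤ))
    (P : Matrix (Fin n) (Fin n) ℝ) (k : ℕ) : Set (Fin n → ℤ) :=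
  sfloorVec '' tildeDigits T A P k

/-- `N(S, δ)`: the smallest number of sets of diameter at most `δ` needed to cover `S`. -/
def coverNum {n : ℕ} (S : Set (EuclideanSpace ℝ (Fin n))) (δ : ℝ) : ℕ :=
  sInf { m : ℕ | ∃ C : Fin m → Set (EuclideanSpace ℝ (Fin n)),
    (∀ i, Metric.diam (C i) ≤ δ) ∧ S ⊆ ⋃ i, C i }

/-- The lower box dimension. -/
def lowerBoxDim {n : ℕ} (S : Set (EuclideanSpace ℝ (Fin n))) : ℝ :=
  liminf (fun δ : ℝ => Real.log (coverNum S δ) / Real.log (1 / δ)) (𝓝[>] (0 : ℝ))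

/-- The upper box dimension. -/
def upperBoxDim {n : ℕ} (S : Set (EuclideanSpace ℝ (Fin n))) : ℝ :=
  limsup (fun δ : ℝ => Real.log (coverNum S δ) / Real.log (1 / δ)) (𝓝[>] (0 : ℝ))

/-- The integer lattice `ℤ^n` inside Euclidean space. -/
def intLattice (n : ℕ) : AddSubgroup (EuclideanSpace ℝ (Fin n)) where
  carrier := { v | ∀ i, ∃ m : ℤ, v i = (m : ℝ) }
  zero_mem' := fun i => ⟨0, by simp⟩
  add_mem' := by
    intro a b ha hb i
    obtain ⟨ma, hma⟩ := ha i
    obtain ⟨mb, hmb⟩ := hb i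
    exact ⟨ma + mb, by push_cast; rw [← hma, ← hmb]; rfl⟩
  neg_mem' := by
    intro a ha i
    obtain ⟨ma, hma⟩ := ha i
    exact ⟨-ma, by push_cast; rw [← hma]; rfl⟩

theorem intLattice_isClosed (n : ℕ) :
    IsClosed ((intLattice n : Set (EuclideanSpace ℝ (Fin n)))) := by
  have h : (intLattice n : Set (EuclideanSpace ℝ (Fin n))) =
      ⋂ i, (fun v : EuclideanSpace ℝ (Fin n) => v i) ⁻¹'
        (Set.range (fun m : ℤ => (m : ℝ))) := by
    ext v
    simp only [Set.mem_iInter, Set.mem_preimage, Set.mem_range]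
    constructor
    · intro hv i; obtain ⟨m, hm⟩ := hv i; exact ⟨m, hm.symm⟩
    · intro hv i; obtain ⟨m, hm⟩ := hv i; exact ⟨m, hm.symm⟩
  rw [h]
  exact isClosed_iInter fun i =>
    (Int.isClosedEmbedding_coe_real.isClosed_range).preimage
      (EuclideanSpace.proj (𝕜 := ℝ) i).continuous

/-- The `n`-torus `ℝ^n / ℤ^n` (with the quotient metric). -/
abbrev Torus (n : ℕ) := EuclideanSpace ℝ (Fin n) ⧸ intLattice n

noncomputable instance (n : ℕ) : NormedAddCommGroup (Torus n) :=
  have : IsClosed ((intLattice n : Set (EuclideanSpace ℝ (Fin n)))) := intLattice_isClosed n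
  QuotientAddGroup.instNormedAddCommGroup (intLattice n)

instance (n : ℕ) : MeasurableSpace (Torus n) := borel _
instance (n : ℕ) : BorelSpace (Torus n) := ⟨rfl⟩

/-- The quotient map `ℝ^n → 𝕋^n`. -/
def tproj (n : ℕ) : EuclideanSpace ℝ (Fin n) → Torus n := QuotientAddGroup.mk

/-- Multiplication by a matrix as an additive homomorphism of Euclidean space. -/
def mulVecAddHom {n : ℕ} (M : Matrix (Fin n) (Fin n) ℝ) :
    EuclideanSpace ℝ (Fin n) →+ EuclideanSpace ℝ (Fin n) where
  toFun v := euc (M *ᵥ v)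
  map_zero' := by
    show euc (M *ᵥ (0 : EuclideanSpace ℝ (Fin n))) = 0
    simp [euc]
  map_add' x y := by
    show euc (M *ᵥ (x + y)) = _
    rw [Matrix.mulVec_add]
    rfl

theorem intLattice_le_comap {n : ℕ} (T : Matrix (Fin n) (Fin n) ℤ) :
    intLattice n ≤ (intLattice n).comap (mulVecAddHom (intMat T)) := by
  intro v hv
  intro i
  choose m hm using hv
  refine ⟨∑ j, T i j * m j, ?_⟩
  show (intMat T *ᵥ v) i = _
  simp only [intMat, Matrix.mulVec, dotProduct, Matrix.map_apply]
  push_cast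
  refine Finset.sum_congr rfl fun j _ => ?_
  rw [hm j]

/-- The toral endomorphism induced by an integer matrix `T`, determined by
`φ_T (π x) = π (T x)`. -/
def torusMap {n : ℕ} (T : Matrix (Fin n) (Fin n) ℤ) : Torus n → Torus n :=
  QuotientAddGroup.map (intLattice n) (intLattice n) (mulVecAddHom (intMat T))
    (intLattice_le_comap T)

/-- `μ` is invariant under `f`. -/
def MeasInvariant {α : Type*} [MeasurableSpace α] (f : α → α) (μ : Measure α) : Prop :=
  ∀ B : Set α, MeasurableSet B → μ (f ⁻¹' B) = μ B

/-- `μ` is an ergodic invariant measure for `f`. -/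
def MeasErgodic {α : Type*} [MeasurableSpace α] (f : α → α) (μ : Measure α) : Prop :=
  MeasInvariant f μ ∧ ∀ B : Set α, MeasurableSet B → f ⁻¹' B = B → μ B = 0 ∨ μ B = 1

/-- The (Euclidean) operator norm of a real matrix. -/
def opNorm {n : ℕ} (M : Matrix (Fin n) (Fin n) ℝ) : ℝ :=
  sSup { t : ℝ | ∃ v : EuclideanSpace ℝ (Fin n), ‖v‖ ≤ 1 ∧ t = ‖euc (M *ᵥ v)‖ }

/-- The smallest modulus of a complex eigenvalue of an integer matrix. -/
def minMod {n : ℕ} (M : Matrix (Fin n) (Fin n) ℤ) : ℝ :=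
  sInf { r : ℝ | ∃ μ : ℂ, (M.map fun x => (x : ℂ)).charpoly.IsRoot μ ∧ r = ‖μ‖ }

/-- The largest modulus of a complex eigenvalue of an integer matrix. -/
def maxMod {n : ℕ} (M : Matrix (Fin n) (Fin n) ℤ) : ℝ :=
  sSup { r : ℝ | ∃ μ : ℂ, (M.map fun x => (x : ℂ)).charpoly.IsRoot μ ∧ r = ‖μ‖ }

lemma norm_euc {n : ℕ} (v : Fin n → ℝ) : ‖euc v‖ = Real.sqrt (∑ i, (v i) ^ 2) := by
  rw [EuclideanSpace.norm_eq]
  congr 1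
  exact Finset.sum_congr rfl fun i _ => by rw [Real.norm_eq_abs, sq_abs]; rfl

lemma sq_norm_euc {n : ℕ} (v : Fin n → ℝ) : ‖euc v‖ ^ 2 = ∑ i, (v i) ^ 2 := by
  rw [norm_euc, Real.sq_sqrt (Finset.sum_nonneg fun i _ => sq_nonneg _)]

-- ℕ shift lemma

lemma nat_shift_sum_le (d t : ℕ) (G : ℕ → ℝ) (hG : ∀ i, 0 ≤ G i) :
    ∑ i ∈ Finset.range d, (if t ≤ i then G (i - t) else 0) ≤ ∑ i ∈ Finset.range d, G i := by
  have h1 : ∑ i ∈ Finset.range d, (if t ≤ i then G (i - t) else 0)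
      = ∑ i ∈ (Finset.range d).filter (fun i => t ≤ i), G (i - t) := by
    rw [Finset.sum_filter]
  have h2 : (Finset.range d).filter (fun i => t ≤ i) = Finset.Ico t d := by
    ext x; simp only [Finset.mem_filter, Finset.mem_range, Finset.mem_Ico]; omega
  rw [h1, h2, Finset.sum_Ico_eq_sum_range]
  have h3 : ∀ i ∈ Finset.range (d - t), G (t + i - t) = G i := fun i _ => by
    congr 1; omega
  rw [Finset.sum_congr rfl h3]
  exact Finset.sum_le_sum_of_subset_of_nonneg
    (Finset.range_subset_range.2 (by omega)) (fun i _ _ => hG i)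

-- pairing lemma

lemma nat_pair_sum (m : ℕ) (F : ℕ → ℝ) :
    ∑ i ∈ Finset.range (2 * m), F i = ∑ j ∈ Finset.range m, (F (2 * j) + F (2 * j + 1)) := by
  induction m with
  | zero => simp
  | succ m ih =>
      have : 2 * (m + 1) = (2 * m + 1) + 1 := by omega
      rw [this, Finset.sum_range_succ, Finset.sum_range_succ, ih, Finset.sum_range_succ]
      ring


-- Fin-level shift sum bound

lemma fin_shift_sum_le {d : ℕ} (t : ℕ) (z : Fin d → ℝ) :
    ∑ i : Fin d, (if h : t ≤ (i : ℕ) then z ⟨(i : ℕ) - t, by omega⟩ else 0) ^ 2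
      ≤ ∑ i : Fin d, (z i) ^ 2 := by
  set G : ℕ → ℝ := fun i => if h : i < d then (z ⟨i, h⟩) ^ 2 else 0 with hG
  have hGnn : ∀ i, 0 ≤ G i := by
    intro i; simp only [hG]; split
    · exact sq_nonneg _
    · exact le_refl 0
  have hL : ∑ i : Fin d, (if h : t ≤ (i : ℕ) then z ⟨(i : ℕ) - t, by omega⟩ else 0) ^ 2
      = ∑ i ∈ Finset.range d, (if t ≤ i then G (i - t) else 0) := by
    rw [← Fin.sum_univ_eq_sum_range (fun i => if t ≤ i then G (i - t) else 0) d]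
    refine Finset.sum_congr rfl fun i _ => ?_
    by_cases h : t ≤ (i : ℕ)
    · have hlt : (i : ℕ) - t < d := by omega
      simp only [dif_pos h, if_pos h, hG, dif_pos hlt]
    · simp [h]
  have hR : ∑ i : Fin d, (z i) ^ 2 = ∑ i ∈ Finset.range d, G i := by
    rw [← Fin.sum_univ_eq_sum_range G d]
    exact Finset.sum_congr rfl fun i _ => by simp [hG, i.isLt]
  rw [hL, hR]
  exact nat_shift_sum_le d t G hGnn

-- triangle-type key lemma

lemma key_norm {E : Type*} [NormedAddCommGroup E] [NormedSpace ℝ E]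
    {ρ ε : ℝ} (hε : 0 ≤ ε) (z w s : E)
    (hw : ρ * ‖z‖ ≤ ‖w‖) (hs : ‖s‖ ≤ ‖z‖) : (ρ - ε) * ‖z‖ ≤ ‖w + ε • s‖ := by
  have h1 : ‖w‖ ≤ ‖w + ε • s‖ + ‖ε • s‖ := by
    calc ‖w‖ = ‖(w + ε • s) - ε • s‖ := by rw [add_sub_cancel_right]
    _ ≤ ‖w + ε • s‖ + ‖ε • s‖ := norm_sub_le _ _
  have h2 : ‖ε • s‖ ≤ ε * ‖z‖ := by
    rw [norm_smul, Real.norm_eq_abs, abs_of_nonneg hε]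
    exact mul_le_mul_of_nonneg_left hs hε
  nlinarith [norm_nonneg z]

lemma opNorm_le {n : ℕ} (M : Matrix (Fin n) (Fin n) ℝ) {b : ℝ} (hb : 0 ≤ b)
    (h : ∀ v : Fin n → ℝ, ‖euc v‖ ≤ 1 → ‖euc (M *ᵥ v)‖ ≤ b) : opNorm M ≤ b := by
  refine Real.sSup_le ?_ hb
  rintro t ⟨v, hv, rfl⟩
  exact h v hv

lemma inv_bound {n : ℕ} (A : Matrix (Fin n) (Fin n) ℝ) {β : ℝ} (hβ : 0 < β)
    (h : ∀ v : Fin n → ℝ, β * ‖euc v‖ ≤ ‖euc (A *ᵥ v)‖) :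
    IsUnit A ∧ ∀ w : Fin n → ℝ, ‖euc (A⁻¹ *ᵥ w)‖ ≤ β⁻¹ * ‖euc w‖ := by
  have hinj : Function.Injective (A.mulVec) := by
    intro v w hvw
    have h0 : A *ᵥ (v - w) = 0 := by
      rw [Matrix.mulVec_sub, hvw, sub_self]
    have := h (v - w)
    rw [h0] at this
    have h1 : ‖euc (0 : Fin n → ℝ)‖ = 0 := norm_zero
    have h2 : ‖euc (v - w)‖ ≤ 0 := by nlinarith [norm_nonneg (euc (v - w))]
    have h3 : euc (v - w) = 0 := norm_le_zero_iff.1 h2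
    have : v - w = 0 := congrArg WithLp.ofLp h3
    exact sub_eq_zero.1 this
  have hu : IsUnit A := Matrix.mulVec_injective_iff_isUnit.1 hinj
  refine ⟨hu, fun w => ?_⟩
  have hAA : A *ᵥ (A⁻¹ *ᵥ w) = w := by
    rw [Matrix.mulVec_mulVec, Matrix.mul_nonsing_inv _ ((Matrix.isUnit_iff_isUnit_det A).1 hu),
      Matrix.one_mulVec]
  have := h (A⁻¹ *ᵥ w)
  rw [hAA] at this
  rw [inv_mul_eq_div, le_div_iff₀' hβ]
  exact this

lemma realJB_mulVec (d : ℕ) (lam : ℝ) (u : Fin d → ℝ) (i : Fin d) :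
    (realJordanBlock d lam *ᵥ u) i
      = lam * u i + (if h : 1 ≤ (i : ℕ) then u ⟨(i : ℕ) - 1, by omega⟩ else 0) := by
  have hpt : ∀ j : Fin d, realJordanBlock d lam i j * u j
      = (if j = i then lam * u j else 0) + (if (i : ℕ) = (j : ℕ) + 1 then u j else 0) := by
    intro j
    by_cases h1 : (i : ℕ) = (j : ℕ) <;> by_cases h2 : (i : ℕ) = (j : ℕ) + 1
    · omega
    · have hji : j = i := by rw [Fin.ext_iff]; omega
      simp [realJordanBlock, h1, h2, hji]
    · have : ¬ j = i := by rw [Fin.ext_iff]; omega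
      simp [realJordanBlock, h1, h2, this]
    · have : ¬ j = i := by rw [Fin.ext_iff]; omega
      simp [realJordanBlock, h1, h2, this]
  have : (realJordanBlock d lam *ᵥ u) i = ∑ j, realJordanBlock d lam i j * u j := rfl
  rw [this, Finset.sum_congr rfl fun j _ => hpt j, Finset.sum_add_distrib,
    Finset.sum_ite_eq' Finset.univ i (fun j => lam * u j)]
  simp only [Finset.mem_univ, if_true]
  congr 1
  by_cases h0 : 1 ≤ (i : ℕ)
  · rw [dif_pos h0]
    have hlt : (i : ℕ) - 1 < d := by omega
    have hcong : ∀ j : Fin d, (if (i : ℕ) = (j : ℕ) + 1 then u j else 0)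
        = (if j = (⟨(i : ℕ) - 1, hlt⟩ : Fin d) then u j else 0) := by
      intro j
      refine if_congr ?_ rfl rfl
      rw [Fin.ext_iff]
      simp only []
      omega
    rw [Finset.sum_congr rfl fun j _ => hcong j,
      Finset.sum_ite_eq' Finset.univ _ (fun j => u j)]
    simp
  · rw [dif_neg h0]
    refine Finset.sum_eq_zero fun j _ => ?_
    rw [if_neg]
    omega

lemma realJB_est (d : ℕ) (lam ρ ε : ℝ) (hlam : |lam| = ρ) (hε : 0 < ε) (hερ : ε ≤ ρ)
    (u : Fin d → ℝ) :
    (ρ - ε) ^ 2 * ∑ i : Fin d, (ε ^ (i : ℕ)) ^ 2 * (u i) ^ 2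
      ≤ ∑ i : Fin d, (ε ^ (i : ℕ)) ^ 2 * ((realJordanBlock d lam *ᵥ u) i) ^ 2 := by
  set z : EuclideanSpace ℝ (Fin d) := euc (fun i => ε ^ (i : ℕ) * u i) with hz
  set sft : EuclideanSpace ℝ (Fin d) :=
    euc (fun i => if h : 1 ≤ (i : ℕ) then z ⟨(i : ℕ) - 1, by omega⟩ else 0) with hsft
  have hzi : ∀ i : Fin d, z i = ε ^ (i : ℕ) * u i := fun i => rfl
  have hdec : ∀ i : Fin d, ε ^ (i : ℕ) * ((realJordanBlock d lam *ᵥ u) i)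
      = (lam • z + ε • sft) i := by
    intro i
    have happ : (lam • z + ε • sft) i = lam * z i + ε * sft i := rfl
    rw [realJB_mulVec, happ]
    by_cases h0 : 1 ≤ (i : ℕ)
    · have hsfti : sft i = z ⟨(i : ℕ) - 1, by omega⟩ := by
        show (if h : 1 ≤ (i : ℕ) then z ⟨(i : ℕ) - 1, by omega⟩ else 0) = _
        rw [dif_pos h0]
      rw [dif_pos h0, hsfti, hzi, hzi]
      show ε ^ (i : ℕ) * (lam * u i + u ⟨(i : ℕ) - 1, by omega⟩) = _
      have hep : ε ^ (i : ℕ) = ε * ε ^ ((i : ℕ) - 1) := by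
        conv_lhs => rw [show (i : ℕ) = ((i : ℕ) - 1) + 1 from by omega]
        rw [pow_succ']
      rw [hep]
      ring
    · have hsfti : sft i = 0 := by
        show (if h : 1 ≤ (i : ℕ) then z ⟨(i : ℕ) - 1, by omega⟩ else 0) = 0
        rw [dif_neg h0]
      rw [dif_neg h0, hsfti, hzi]
      ring
  have hs : ‖sft‖ ≤ ‖z‖ := by
    have h1 : ‖sft‖ ^ 2 ≤ ‖z‖ ^ 2 := by
      rw [sq_norm_euc, sq_norm_euc]
      exact fin_shift_sum_le 1 (fun i => z i)
    have := Real.sqrt_le_sqrt h1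
    rwa [Real.sqrt_sq (norm_nonneg _), Real.sqrt_sq (norm_nonneg _)] at this
  have hw : ρ * ‖z‖ ≤ ‖lam • z‖ := by
    rw [norm_smul, Real.norm_eq_abs, hlam]
  have hkey : (ρ - ε) * ‖z‖ ≤ ‖lam • z + ε • sft‖ := key_norm hε.le z _ sft hw hs
  have hsq : ((ρ - ε) * ‖z‖) ^ 2 ≤ ‖lam • z + ε • sft‖ ^ 2 := by
    have h1 : 0 ≤ (ρ - ε) * ‖z‖ := mul_nonneg (by linarith) (norm_nonneg _)
    nlinarith
  rw [mul_pow, sq_norm_euc] at hsq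
  have h2 : ‖lam • z + ε • sft‖ ^ 2 = ∑ i : Fin d, ((lam • z + ε • sft) i) ^ 2 :=
    sq_norm_euc _
  rw [h2] at hsq
  calc (ρ - ε) ^ 2 * ∑ i : Fin d, (ε ^ (i : ℕ)) ^ 2 * (u i) ^ 2
      = (ρ - ε) ^ 2 * ∑ i : Fin d, (z i) ^ 2 := by
        congr 1
        exact Finset.sum_congr rfl fun i _ => by rw [hzi, mul_pow]
    _ ≤ ∑ i : Fin d, ((lam • z + ε • sft) i) ^ 2 := hsq
    _ = ∑ i : Fin d, (ε ^ (i : ℕ)) ^ 2 * ((realJordanBlock d lam *ᵥ u) i) ^ 2 := by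
        exact Finset.sum_congr rfl fun i _ => by rw [← hdec, mul_pow]

def pIdx {m : ℕ} (i : Fin (2 * m)) : Fin (2 * m) :=
  ⟨2 * ((i : ℕ) / 2) + (1 - (i : ℕ) % 2), by omega⟩

lemma cJB_mulVec (m : ℕ) (a b : ℝ) (u : Fin (2 * m) → ℝ) (i : Fin (2 * m)) :
    (complexJordanBlock m a b *ᵥ u) i
      = a * u i + (if (i : ℕ) % 2 = 0 then -b else b) * u (pIdx i)
        + (if h : 2 ≤ (i : ℕ) then u ⟨(i : ℕ) - 2, by omega⟩ else 0) := by
  have hpt : ∀ j : Fin (2 * m), complexJordanBlock m a b i j * u j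
      = (if j = i then a * u j else 0)
        + (if j = pIdx i then (if (i : ℕ) % 2 = 0 then -b else b) * u j else 0)
        + (if (j : ℕ) + 2 = (i : ℕ) then u j else 0) := by
    intro j
    simp only [complexJordanBlock, Matrix.of_apply, Fin.ext_iff, pIdx]
    split_ifs <;> (first | ring1 | (exfalso; omega))
  have hsum : (complexJordanBlock m a b *ᵥ u) i
      = ∑ j, complexJordanBlock m a b i j * u j := rfl
  rw [hsum, Finset.sum_congr rfl fun j _ => hpt j, Finset.sum_add_distrib,
    Finset.sum_add_distrib,
    Finset.sum_ite_eq' Finset.univ i (fun j => a * u j),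
    Finset.sum_ite_eq' Finset.univ (pIdx i)
      (fun j => (if (i : ℕ) % 2 = 0 then -b else b) * u j)]
  simp only [Finset.mem_univ, if_true]
  congr 1
  by_cases h0 : 2 ≤ (i : ℕ)
  · rw [dif_pos h0]
    have hlt : (i : ℕ) - 2 < 2 * m := by omega
    have hcong : ∀ j : Fin (2 * m), (if (j : ℕ) + 2 = (i : ℕ) then u j else 0)
        = (if j = (⟨(i : ℕ) - 2, hlt⟩ : Fin (2 * m)) then u j else 0) := by
      intro j
      refine if_congr ?_ rfl rfl
      rw [Fin.ext_iff]
      simp only []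
      omega
    rw [Finset.sum_congr rfl fun j _ => hcong j,
      Finset.sum_ite_eq' Finset.univ _ (fun j => u j)]
    simp
  · rw [dif_neg h0]
    refine Finset.sum_eq_zero fun j _ => ?_
    rw [if_neg]
    omega

lemma cJB_pair_sum (m : ℕ) (a b : ℝ) (z : Fin (2 * m) → ℝ) :
    ∑ i : Fin (2 * m), (a * z i + (if (i : ℕ) % 2 = 0 then -b else b) * z (pIdx i)) ^ 2
      = (a ^ 2 + b ^ 2) * ∑ i : Fin (2 * m), (z i) ^ 2 := by
  set D : Fin (2 * m) → ℝ :=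
    fun i => a * z i + (if (i : ℕ) % 2 = 0 then -b else b) * z (pIdx i) with hD
  set F : ℕ → ℝ := fun i => if h : i < 2 * m then (D ⟨i, h⟩) ^ 2 else 0 with hF
  set G : ℕ → ℝ := fun i => if h : i < 2 * m then (z ⟨i, h⟩) ^ 2 else 0 with hG
  have hL : ∑ i : Fin (2 * m), (D i) ^ 2 = ∑ i ∈ Finset.range (2 * m), F i := by
    rw [← Fin.sum_univ_eq_sum_range F (2 * m)]
    exact Finset.sum_congr rfl fun i _ => by simp [hF, i.isLt]
  have hR : ∑ i : Fin (2 * m), (z i) ^ 2 = ∑ i ∈ Finset.range (2 * m), G i := by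
    rw [← Fin.sum_univ_eq_sum_range G (2 * m)]
    exact Finset.sum_congr rfl fun i _ => by simp [hG, i.isLt]
  rw [hL, hR, nat_pair_sum m F, nat_pair_sum m G, Finset.mul_sum]
  refine Finset.sum_congr rfl fun j hj => ?_
  have hjm : j < m := Finset.mem_range.1 hj
  have h0 : 2 * j < 2 * m := by omega
  have h1 : 2 * j + 1 < 2 * m := by omega
  have hF0 : F (2 * j) = (D ⟨2 * j, h0⟩) ^ 2 := by rw [hF]; simp [h0]
  have hF1 : F (2 * j + 1) = (D ⟨2 * j + 1, h1⟩) ^ 2 := by rw [hF]; simp [h1]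
  have hG0 : G (2 * j) = (z ⟨2 * j, h0⟩) ^ 2 := by rw [hG]; simp [h0]
  have hG1 : G (2 * j + 1) = (z ⟨2 * j + 1, h1⟩) ^ 2 := by rw [hG]; simp [h1]
  have hp0 : pIdx (⟨2 * j, h0⟩ : Fin (2 * m)) = ⟨2 * j + 1, h1⟩ := by
    rw [pIdx, Fin.ext_iff]; simp only []; omega
  have hp1 : pIdx (⟨2 * j + 1, h1⟩ : Fin (2 * m)) = ⟨2 * j, h0⟩ := by
    rw [pIdx, Fin.ext_iff]; simp only []; omega
  have hD0 : D ⟨2 * j, h0⟩ = a * z ⟨2 * j, h0⟩ - b * z ⟨2 * j + 1, h1⟩ := by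
    rw [hD]; simp only [hp0]
    rw [if_pos (show (((⟨2 * j, h0⟩ : Fin (2 * m)) : ℕ)) % 2 = 0 from by show 2 * j % 2 = 0; omega)]
    ring
  have hD1 : D ⟨2 * j + 1, h1⟩ = b * z ⟨2 * j, h0⟩ + a * z ⟨2 * j + 1, h1⟩ := by
    rw [hD]; simp only [hp1]
    rw [if_neg (show ¬ (((⟨2 * j + 1, h1⟩ : Fin (2 * m)) : ℕ)) % 2 = 0 from by show ¬ (2 * j + 1) % 2 = 0; omega)]
    ring
  rw [hF0, hF1, hG0, hG1, hD0, hD1]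
  ring

lemma cJB_est (m : ℕ) (a b ρ ε : ℝ) (hab : Real.sqrt (a ^ 2 + b ^ 2) = ρ)
    (hε : 0 < ε) (hερ : ε ≤ ρ) (u : Fin (2 * m) → ℝ) :
    (ρ - ε) ^ 2 * ∑ i : Fin (2 * m), (ε ^ ((i : ℕ) / 2)) ^ 2 * (u i) ^ 2
      ≤ ∑ i : Fin (2 * m), (ε ^ ((i : ℕ) / 2)) ^ 2 * ((complexJordanBlock m a b *ᵥ u) i) ^ 2 := by
  set z : EuclideanSpace ℝ (Fin (2 * m)) := euc (fun i => ε ^ ((i : ℕ) / 2) * u i) with hz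
  set Dz : EuclideanSpace ℝ (Fin (2 * m)) :=
    euc (fun i => a * z i + (if (i : ℕ) % 2 = 0 then -b else b) * z (pIdx i)) with hDz
  set sft : EuclideanSpace ℝ (Fin (2 * m)) :=
    euc (fun i => if h : 2 ≤ (i : ℕ) then z ⟨(i : ℕ) - 2, by omega⟩ else 0) with hsft
  have hzi : ∀ i : Fin (2 * m), z i = ε ^ ((i : ℕ) / 2) * u i := fun i => rfl
  have hdec : ∀ i : Fin (2 * m), ε ^ ((i : ℕ) / 2) * ((complexJordanBlock m a b *ᵥ u) i)
      = (Dz + ε • sft) i := by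
    intro i
    have happ : (Dz + ε • sft) i
        = (a * z i + (if (i : ℕ) % 2 = 0 then -b else b) * z (pIdx i))
          + ε * (if h : 2 ≤ (i : ℕ) then z ⟨(i : ℕ) - 2, by omega⟩ else 0) := rfl
    rw [cJB_mulVec, happ, hzi, hzi]
    have hpv : ((pIdx i : Fin (2 * m)) : ℕ) / 2 = (i : ℕ) / 2 := by
      rw [pIdx]; simp only []; omega
    rw [hpv]
    by_cases h0 : 2 ≤ (i : ℕ)
    · rw [dif_pos h0, dif_pos h0, hzi]
      have hiv : ((⟨(i : ℕ) - 2, by omega⟩ : Fin (2 * m)) : ℕ) = (i : ℕ) - 2 := rfl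
      rw [hiv]
      have hep : ε ^ ((i : ℕ) / 2) = ε * ε ^ (((i : ℕ) - 2) / 2) := by
        conv_lhs => rw [show (i : ℕ) / 2 = (((i : ℕ) - 2) / 2) + 1 from by omega]
        rw [pow_succ']
      rw [hep]
      ring
    · rw [dif_neg h0, dif_neg h0]
      ring
  have hs : ‖sft‖ ≤ ‖z‖ := by
    have h1 : ‖sft‖ ^ 2 ≤ ‖z‖ ^ 2 := by
      rw [sq_norm_euc, sq_norm_euc]
      exact fin_shift_sum_le 2 (fun i => z i)
    have := Real.sqrt_le_sqrt h1
    rwa [Real.sqrt_sq (norm_nonneg _), Real.sqrt_sq (norm_nonneg _)] at this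
  have hDnorm : ρ * ‖z‖ ≤ ‖Dz‖ := by
    have h1 : ‖Dz‖ ^ 2 = (a ^ 2 + b ^ 2) * ‖z‖ ^ 2 := by
      rw [sq_norm_euc, sq_norm_euc]
      exact cJB_pair_sum m a b (fun i => z i)
    have h2 : ‖Dz‖ = ρ * ‖z‖ := by
      have h3 : ‖Dz‖ = Real.sqrt (‖Dz‖ ^ 2) := (Real.sqrt_sq (norm_nonneg _)).symm
      rw [h3, h1, Real.sqrt_mul (by positivity), hab, Real.sqrt_sq (norm_nonneg _)]
    rw [h2]
  have hkey : (ρ - ε) * ‖z‖ ≤ ‖Dz + ε • sft‖ := key_norm hε.le z Dz sft hDnorm hs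
  have hsq : ((ρ - ε) * ‖z‖) ^ 2 ≤ ‖Dz + ε • sft‖ ^ 2 := by
    have h1 : 0 ≤ (ρ - ε) * ‖z‖ := mul_nonneg (by linarith) (norm_nonneg _)
    nlinarith
  rw [mul_pow, sq_norm_euc] at hsq
  have h2 : ‖Dz + ε • sft‖ ^ 2 = ∑ i : Fin (2 * m), ((Dz + ε • sft) i) ^ 2 := sq_norm_euc _
  rw [h2] at hsq
  calc (ρ - ε) ^ 2 * ∑ i : Fin (2 * m), (ε ^ ((i : ℕ) / 2)) ^ 2 * (u i) ^ 2
      = (ρ - ε) ^ 2 * ∑ i : Fin (2 * m), (z i) ^ 2 := by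
        congr 1
        exact Finset.sum_congr rfl fun i _ => by rw [hzi, mul_pow]
    _ ≤ ∑ i : Fin (2 * m), ((Dz + ε • sft) i) ^ 2 := hsq
    _ = ∑ i : Fin (2 * m), (ε ^ ((i : ℕ) / 2)) ^ 2 * ((complexJordanBlock m a b *ᵥ u) i) ^ 2 := by
        exact Finset.sum_congr rfl fun i _ => by rw [← hdec, mul_pow]

lemma block_est {d np : ℕ} {B : Matrix (Fin d) (Fin d) ℝ} {ρ : ℝ}
    (hB : IsJordanBlock B ρ np) {ε : ℝ} (hε : 0 < ε) (hερ : ε ≤ ρ) :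
    ∃ wt : Fin d → ℝ, (∀ i, 0 < wt i) ∧
      ∀ u : Fin d → ℝ, (ρ - ε) ^ 2 * ∑ i, wt i * (u i) ^ 2
        ≤ ∑ i, wt i * ((B *ᵥ u) i) ^ 2 := by
  rcases hB with ⟨-, lam, hlam, rfl⟩ | ⟨h, a, b, -, hab, rfl⟩
  · exact ⟨fun i => (ε ^ (i : ℕ)) ^ 2, fun i => by positivity,
      fun u => realJB_est d lam ρ ε hlam hε hερ u⟩
  · subst h
    have hre : Matrix.reindex (finCongr (rfl : 2 * np = 2 * np)).symm
        (finCongr rfl).symm (complexJordanBlock np a b) = complexJordanBlock np a b := by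
      simp
    rw [hre]
    exact ⟨fun i => (ε ^ ((i : ℕ) / 2)) ^ 2, fun i => by positivity,
      fun u => cJB_est np a b ρ ε hab hε hερ u⟩

lemma jordan_lower {n s : ℕ} (J : Matrix (Fin n) (Fin n) ℝ) (ρ : Fin s → ℝ)
    (hJ : IsRealJordanLike J ρ) :
    ∃ θ C : ℝ, 1 < θ ∧ 1 ≤ C ∧ ∀ (m : ℕ) (v : Fin n → ℝ),
      θ ^ m * ‖euc v‖ ≤ C * ‖euc ((J ^ m) *ᵥ v)‖ := by
  obtain ⟨hρ1, hmono, d, np, B, e, hnp, hblocks, -, hJeq⟩ := hJ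
  rcases Nat.eq_zero_or_pos n with hn | hn
  · subst hn
    refine ⟨2, 1, one_lt_two, le_refl 1, fun m v => ?_⟩
    have h1 : euc v = 0 := Subsingleton.elim _ _
    have h2 : euc ((J ^ m) *ᵥ v) = 0 := Subsingleton.elim _ _
    rw [h1, h2]
    simp
  have hs : 0 < s := by
    by_contra hs0
    have hs0 : s = 0 := by omega
    subst hs0
    exact (e.symm ⟨0, hn⟩).1.elim0
  set p0 : Fin s := ⟨0, hs⟩ with hp0
  have hρ0 : 1 < ρ p0 := hρ1 p0
  set ε : ℝ := (ρ p0 - 1) / 2 with hεdef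
  set θ : ℝ := (ρ p0 + 1) / 2 with hθdef
  have hε : 0 < ε := by rw [hεdef]; linarith
  have hθ : 1 < θ := by rw [hθdef]; linarith
  have hρp : ∀ p, ρ p0 ≤ ρ p := fun p =>
    hmono.monotone (show p0 ≤ p by rw [Fin.le_def]; exact Nat.zero_le _)
  have hερ : ∀ p, ε ≤ ρ p := fun p => by have := hρp p; rw [hεdef]; linarith
  have hθρ : ∀ p, θ ≤ ρ p - ε := fun p => by
    have := hρp p; rw [hεdef, hθdef]; linarith
  choose wt hwtpos hwtest using fun p => block_est (hblocks p) hε (hερ p)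
  set W : Fin n → ℝ := fun i => wt (e.symm i).1 (e.symm i).2 with hW
  have hWpos : ∀ i, 0 < W i := fun i => hwtpos _ _
  -- sigma decomposition of weighted sums
  have hsig : ∀ g : Fin n → ℝ, ∑ i, W i * (g i) ^ 2
      = ∑ p, ∑ j, wt p j * (g (e ⟨p, j⟩)) ^ 2 := by
    intro g
    rw [← Equiv.sum_comp e (fun i => W i * (g i) ^ 2), ← Finset.univ_sigma_univ,
      Finset.sum_sigma]
    exact Finset.sum_congr rfl fun p _ => Finset.sum_congr rfl fun j _ => by
      show wt (e.symm (e ⟨p, j⟩)).fst (e.symm (e ⟨p, j⟩)).snd * g (e ⟨p, j⟩) ^ 2 = _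
      rw [show e.symm (e ⟨p, j⟩) = ⟨p, j⟩ from Equiv.symm_apply_apply e _]
  -- block action
  have hblockact : ∀ (v : Fin n → ℝ) (p : Fin s) (jj : Fin (d p)),
      (J *ᵥ v) (e ⟨p, jj⟩) = ((B p) *ᵥ (fun j => v (e ⟨p, j⟩))) jj := by
    intro v p jj
    have h1 : (J *ᵥ v) (e ⟨p, jj⟩) = ∑ j, J (e ⟨p, jj⟩) j * v j := rfl
    rw [h1, ← Equiv.sum_comp e (fun j => J (e ⟨p, jj⟩) j * v j), ← Finset.univ_sigma_univ,
      Finset.sum_sigma]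
    have h2 : ∀ (q : Fin s) (j : Fin (d q)), J (e ⟨p, jj⟩) (e ⟨q, j⟩)
        = Matrix.blockDiagonal' B ⟨p, jj⟩ ⟨q, j⟩ := by
      intro q j
      rw [hJeq]
      simp [Matrix.reindex_apply, Matrix.submatrix_apply, Equiv.symm_apply_apply]
    rw [Finset.sum_congr rfl fun q _ => Finset.sum_congr rfl fun j _ => by rw [h2]]
    rw [Finset.sum_eq_single p]
    · have h3 : ∀ j : Fin (d p), Matrix.blockDiagonal' B ⟨p, jj⟩ ⟨p, j⟩ = B p jj j :=
        fun j => Matrix.blockDiagonal'_apply_eq B p jj j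
      rw [Finset.sum_congr rfl fun j _ => by rw [h3]]
      rfl
    · intro q _ hq
      refine Finset.sum_eq_zero fun j _ => ?_
      rw [Matrix.blockDiagonal'_apply_ne B jj j (Ne.symm hq), zero_mul]
    · intro h; exact absurd (Finset.mem_univ p) h
  -- one-step estimate
  have hstep : ∀ v : Fin n → ℝ,
      θ ^ 2 * ∑ i, W i * (v i) ^ 2 ≤ ∑ i, W i * ((J *ᵥ v) i) ^ 2 := by
    intro v
    rw [hsig, hsig, Finset.mul_sum]
    refine Finset.sum_le_sum fun p _ => ?_
    have hS : (0 : ℝ) ≤ ∑ j, wt p j * (v (e ⟨p, j⟩)) ^ 2 :=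
      Finset.sum_nonneg fun j _ => mul_nonneg (hwtpos p j).le (sq_nonneg _)
    have h1 : θ ^ 2 * ∑ j, wt p j * (v (e ⟨p, j⟩)) ^ 2
        ≤ (ρ p - ε) ^ 2 * ∑ j, wt p j * (v (e ⟨p, j⟩)) ^ 2 := by
      refine mul_le_mul_of_nonneg_right ?_ hS
      have h2 : θ ≤ ρ p - ε := hθρ p
      have h3 : (0 : ℝ) ≤ θ := by linarith
      nlinarith
    refine h1.trans ?_
    refine (hwtest p (fun j => v (e ⟨p, j⟩))).trans_eq ?_
    exact Finset.sum_congr rfl fun j _ => by rw [hblockact]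
  -- iterate
  have hiter : ∀ (m : ℕ) (v : Fin n → ℝ),
      (θ ^ m) ^ 2 * ∑ i, W i * (v i) ^ 2 ≤ ∑ i, W i * (((J ^ m) *ᵥ v) i) ^ 2 := by
    intro m
    induction m with
    | zero =>
        intro v
        simp [Matrix.one_mulVec]
    | succ m ih =>
        intro v
        have h1 : (J ^ (m + 1)) *ᵥ v = (J ^ m) *ᵥ (J *ᵥ v) := by
          rw [pow_succ, ← Matrix.mulVec_mulVec]
        rw [h1]
        have h2 := ih (J *ᵥ v)
        have h3 := hstep v
        have h4 : (0 : ℝ) ≤ (θ ^ m) ^ 2 := sq_nonneg _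
        calc (θ ^ (m + 1)) ^ 2 * ∑ i, W i * (v i) ^ 2
            = (θ ^ m) ^ 2 * (θ ^ 2 * ∑ i, W i * (v i) ^ 2) := by ring
          _ ≤ (θ ^ m) ^ 2 * ∑ i, W i * ((J *ᵥ v) i) ^ 2 :=
              mul_le_mul_of_nonneg_left h3 h4
          _ ≤ ∑ i, W i * (((J ^ m) *ᵥ (J *ᵥ v)) i) ^ 2 := h2
  -- weights min/max
  have huniv : (Finset.univ : Finset (Fin n)).Nonempty := ⟨⟨0, hn⟩, Finset.mem_univ _⟩
  obtain ⟨imin, -, hmin⟩ := Finset.exists_min_image Finset.univ W huniv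
  obtain ⟨imax, -, hmax⟩ := Finset.exists_max_image Finset.univ W huniv
  set α : ℝ := W imin with hα
  set β : ℝ := W imax with hβ
  have hα0 : 0 < α := hWpos imin
  have hαβ : α ≤ β := hmin imax (Finset.mem_univ _)
  refine ⟨θ, Real.sqrt (β / α), hθ, ?_, ?_⟩
  · rw [show (1 : ℝ) = Real.sqrt 1 from (Real.sqrt_one).symm]
    exact Real.sqrt_le_sqrt ((one_le_div hα0).2 hαβ)
  intro m v
  have hA : (0 : ℝ) ≤ ∑ i, (v i) ^ 2 := Finset.sum_nonneg fun i _ => sq_nonneg _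
  have hB : (0 : ℝ) ≤ ∑ i, (((J ^ m) *ᵥ v) i) ^ 2 :=
    Finset.sum_nonneg fun i _ => sq_nonneg _
  have h1 : α * ∑ i, (v i) ^ 2 ≤ ∑ i, W i * (v i) ^ 2 := by
    rw [Finset.mul_sum]
    exact Finset.sum_le_sum fun i _ =>
      mul_le_mul_of_nonneg_right (hmin i (Finset.mem_univ _)) (sq_nonneg _)
  have h2 : ∑ i, W i * (((J ^ m) *ᵥ v) i) ^ 2 ≤ β * ∑ i, (((J ^ m) *ᵥ v) i) ^ 2 := by
    rw [Finset.mul_sum]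
    exact Finset.sum_le_sum fun i _ =>
      mul_le_mul_of_nonneg_right (hmax i (Finset.mem_univ _)) (sq_nonneg _)
  have h3 := hiter m v
  have hkey : (θ ^ m) ^ 2 * ∑ i, (v i) ^ 2 ≤ (β / α) * ∑ i, (((J ^ m) *ᵥ v) i) ^ 2 := by
    rw [div_mul_eq_mul_div, le_div_iff₀ hα0]
    nlinarith [sq_nonneg (θ ^ m)]
  rw [norm_euc, norm_euc]
  have h4 : θ ^ m * Real.sqrt (∑ i, (v i) ^ 2)
      = Real.sqrt ((θ ^ m) ^ 2 * ∑ i, (v i) ^ 2) := by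
    rw [Real.sqrt_mul (sq_nonneg _), Real.sqrt_sq (pow_nonneg (by linarith : (0:ℝ) ≤ θ) m)]
  have h5 : Real.sqrt (β / α) * Real.sqrt (∑ i, (((J ^ m) *ᵥ v) i) ^ 2)
      = Real.sqrt ((β / α) * ∑ i, (((J ^ m) *ᵥ v) i) ^ 2) := by
    rw [Real.sqrt_mul (le_of_lt (div_pos (hWpos imax) hα0))]
  rw [h4, h5]
  exact Real.sqrt_le_sqrt hkey

lemma abs_sceil_sub_le (t : ℝ) : |((sceil t : ℤ) : ℝ) - t| ≤ 1 := by
  rw [sceil]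
  by_cases h : 0 ≤ t
  · rw [if_pos h, abs_le]
    constructor
    · have := Int.le_ceil t; linarith
    · have := Int.ceil_lt_add_one t; push_cast; linarith
  · rw [if_neg h, abs_of_neg (by linarith : t < 0), abs_le]
    push_cast
    have h1 := Int.le_ceil (-t)
    have h2 := Int.ceil_lt_add_one (-t)
    constructor <;> linarith

lemma err_bound {n : ℕ} (J : Matrix (Fin n) (Fin n) ℝ) (k : ℕ) (v : Fin n → ℝ) :
    ‖euc ((intMat (pertMat J k) - J ^ k) *ᵥ v)‖ ≤ n * ‖euc v‖ := by
  set E : Matrix (Fin n) (Fin n) ℝ := intMat (pertMat J k) - J ^ k with hE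
  have hEij : ∀ i j, |E i j| ≤ 1 := by
    intro i j
    rw [hE]
    show |intMat (pertMat J k) i j - (J ^ k) i j| ≤ 1
    exact abs_sceil_sub_le _
  have hsq : ‖euc (E *ᵥ v)‖ ^ 2 ≤ (n * ‖euc v‖) ^ 2 := by
    rw [sq_norm_euc]
    have h1 : ∀ i : Fin n, ((E *ᵥ v) i) ^ 2 ≤ (n : ℝ) * ∑ j, (v j) ^ 2 := by
      intro i
      have h2 : |(E *ᵥ v) i| ≤ ∑ j, |v j| := by
        have h3 : (E *ᵥ v) i = ∑ j, E i j * v j := rfl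
        rw [h3]
        refine (Finset.abs_sum_le_sum_abs _ _).trans ?_
        refine Finset.sum_le_sum fun j _ => ?_
        rw [abs_mul]
        calc |E i j| * |v j| ≤ 1 * |v j| :=
              mul_le_mul_of_nonneg_right (hEij i j) (abs_nonneg _)
          _ = |v j| := one_mul _
      have h4 : ((E *ᵥ v) i) ^ 2 ≤ (∑ j, |v j|) ^ 2 := by
        rw [← sq_abs]
        exact pow_le_pow_left₀ (abs_nonneg _) h2 2
      refine h4.trans ?_
      have h5 := sq_sum_le_card_mul_sum_sq (s := (Finset.univ : Finset (Fin n)))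
        (f := fun j => |v j|)
      have h6 : ∀ j : Fin n, |v j| ^ 2 = (v j) ^ 2 := fun j => sq_abs _
      rw [Finset.sum_congr rfl fun j _ => h6 j] at h5
      simpa using h5
    calc ∑ i, ((E *ᵥ v) i) ^ 2 ≤ ∑ _i : Fin n, ((n : ℝ) * ∑ j, (v j) ^ 2) :=
          Finset.sum_le_sum fun i _ => h1 i
      _ = (n : ℝ) * ((n : ℝ) * ∑ j, (v j) ^ 2) := by
          rw [Finset.sum_const, Finset.card_univ, Fintype.card_fin, nsmul_eq_mul]
      _ = (n * ‖euc v‖) ^ 2 := by rw [mul_pow, sq_norm_euc]; ring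
  have h7 : (0 : ℝ) ≤ n * ‖euc v‖ := by positivity
  nlinarith [norm_nonneg (euc (E *ᵥ v))]

/-- crude norm estimates `‖J^{-kl}‖, ‖T_k^{-l}‖ ≤ c'/η^{kl}`. -/
theorem crude_norm_estimates {n s : ℕ} (J : Matrix (Fin n) (Fin n) ℝ)
    (ρ : Fin s → ℝ) (hJ : IsRealJordanLike J ρ) :
    ∃ c' η : ℝ, 0 < c' ∧ 1 < η ∧ ∃ k₀ : ℕ, ∀ k, k₀ ≤ k →
      IsUnit (intMat (pertMat J k)) ∧
      ∀ l : ℕ, opNorm ((J ^ (k * l))⁻¹) ≤ c' / η ^ (k * l) ∧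
        opNorm ((intMat (pertMat J k) ^ l)⁻¹) ≤ c' / η ^ (k * l) := by
  obtain ⟨θ, C, hθ, hC, hest⟩ := jordan_lower J ρ hJ
  have hC0 : (0 : ℝ) < C := by linarith
  set η : ℝ := (1 + θ) / 2 with hηdef
  have hη : 1 < η := by rw [hηdef]; linarith
  have hη0 : (0 : ℝ) < η := by linarith
  have hηθ : η < θ := by rw [hηdef]; linarith
  have hr : 1 < θ / η := (one_lt_div hη0).2 hηθ
  obtain ⟨k₀, hk₀⟩ := pow_unbounded_of_one_lt (C * (n + 1)) hr
  refine ⟨C, η, hC0, hη, k₀, ?_⟩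
  intro k hk
  -- general J^m inverse bound
  have hJm : ∀ m : ℕ, IsUnit (J ^ m) ∧ opNorm ((J ^ m)⁻¹) ≤ C / η ^ m := by
    intro m
    have hβ : (0 : ℝ) < θ ^ m / C := by positivity
    have hlow : ∀ v : Fin n → ℝ, (θ ^ m / C) * ‖euc v‖ ≤ ‖euc ((J ^ m) *ᵥ v)‖ := by
      intro v
      rw [div_mul_eq_mul_div, div_le_iff₀ hC0, mul_comm (‖euc ((J ^ m) *ᵥ v)‖) C]
      exact hest m v
    obtain ⟨hu, hb⟩ := inv_bound (J ^ m) hβ hlow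
    refine ⟨hu, ?_⟩
    refine opNorm_le _ (by positivity) fun v hv => ?_
    refine (hb v).trans ?_
    have h1 : (θ ^ m / C)⁻¹ = C / θ ^ m := by
      rw [inv_div]
    rw [h1]
    have h2 : C / θ ^ m * ‖euc v‖ ≤ C / θ ^ m * 1 :=
      mul_le_mul_of_nonneg_left hv (by positivity)
    refine h2.trans ?_
    rw [mul_one]
    refine div_le_div_of_nonneg_left hC0.le (by positivity) ?_
    exact pow_le_pow_left₀ hη0.le hηθ.le m
  -- lower bound for T_k
  set T : Matrix (Fin n) (Fin n) ℝ := intMat (pertMat J k) with hT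
  have hTlow : ∀ v : Fin n → ℝ, η ^ k * ‖euc v‖ ≤ ‖euc (T *ᵥ v)‖ := by
    intro v
    have hdecomp : T *ᵥ v = (J ^ k) *ᵥ v + (T - J ^ k) *ᵥ v := by
      rw [Matrix.sub_mulVec]
      ring_nf
    have htri : ‖euc ((J ^ k) *ᵥ v)‖ - ‖euc ((T - J ^ k) *ᵥ v)‖ ≤ ‖euc (T *ᵥ v)‖ := by
      rw [hdecomp]
      have := norm_sub_le (euc ((J ^ k) *ᵥ v + (T - J ^ k) *ᵥ v)) (euc ((T - J ^ k) *ᵥ v))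
      have heq : euc ((J ^ k) *ᵥ v + (T - J ^ k) *ᵥ v) - euc ((T - J ^ k) *ᵥ v)
          = euc ((J ^ k) *ᵥ v) := by
        show WithLp.toLp 2 ((J ^ k) *ᵥ v + (T - J ^ k) *ᵥ v) - WithLp.toLp 2 ((T - J ^ k) *ᵥ v) = _
        rw [← WithLp.toLp_sub, add_sub_cancel_right]
        rfl
      rw [heq] at this
      linarith
    have herr := err_bound J k v
    have hJk : θ ^ k * ‖euc v‖ ≤ C * ‖euc ((J ^ k) *ᵥ v)‖ := hest k v
    -- arithmetic: θ^k ≥ C*n + C*η^k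
    have hpk : C * (n + 1) ≤ (θ / η) ^ k := by
      refine hk₀.le.trans ?_
      exact pow_le_pow_right₀ hr.le hk
    have hηk1 : (1 : ℝ) ≤ η ^ k := one_le_pow₀ hη.le
    have hid : (θ / η) ^ k * η ^ k = θ ^ k := by
      rw [div_pow, div_mul_cancel₀]
      positivity
    have hηk0 : (0 : ℝ) ≤ η ^ k := by positivity
    have hnum : C * (n : ℝ) + C * η ^ k ≤ θ ^ k := by
      nlinarith [mul_le_mul_of_nonneg_right hpk hηk0, hηk1, hC0,
        mul_nonneg (mul_nonneg hC0.le (Nat.cast_nonneg n : (0:ℝ) ≤ (n:ℝ)))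
          (by linarith : (0:ℝ) ≤ η ^ k - 1)]
    have hv0 : (0 : ℝ) ≤ ‖euc v‖ := norm_nonneg _
    rw [← hT] at herr
    nlinarith [herr, hJk, hv0, mul_le_mul_of_nonneg_right hnum hv0,
      mul_le_mul_of_nonneg_left htri hC0.le, hC]
  -- powers of T
  have hTl : ∀ (l : ℕ) (v : Fin n → ℝ), (η ^ k) ^ l * ‖euc v‖ ≤ ‖euc ((T ^ l) *ᵥ v)‖ := by
    intro l
    induction l with
    | zero => intro v; simp [Matrix.one_mulVec]
    | succ l ih =>
        intro v
        have h1 : (T ^ (l + 1)) *ᵥ v = (T ^ l) *ᵥ (T *ᵥ v) := by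
          rw [pow_succ, ← Matrix.mulVec_mulVec]
        rw [h1]
        have h2 := ih (T *ᵥ v)
        have h3 := hTlow v
        have h4 : (0 : ℝ) ≤ (η ^ k) ^ l := by positivity
        calc (η ^ k) ^ (l + 1) * ‖euc v‖ = (η ^ k) ^ l * (η ^ k * ‖euc v‖) := by ring
          _ ≤ (η ^ k) ^ l * ‖euc (T *ᵥ v)‖ := mul_le_mul_of_nonneg_left h3 h4
          _ ≤ ‖euc ((T ^ l) *ᵥ (T *ᵥ v))‖ := h2
  have hTunit : IsUnit T := by
    have h := inv_bound T (by positivity : (0:ℝ) < η ^ k) hTlow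
    exact h.1
  refine ⟨hTunit, fun l => ⟨(hJm (k * l)).2, ?_⟩⟩
  have hβ : (0 : ℝ) < (η ^ k) ^ l := by positivity
  obtain ⟨-, hb⟩ := inv_bound (T ^ l) hβ (hTl l)
  refine opNorm_le _ (by positivity) fun v hv => ?_
  refine (hb v).trans ?_
  have h1 : ((η ^ k) ^ l)⁻¹ * ‖euc v‖ ≤ ((η ^ k) ^ l)⁻¹ * 1 :=
    mul_le_mul_of_nonneg_left hv (by positivity)
  refine h1.trans ?_
  rw [mul_one, ← pow_mul, inv_eq_one_div]
  exact (div_le_div_iff_of_pos_right (by positivity)).2 hC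


end FracPert
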